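/- Let S(x) be a power sum such that the function n ↦ S(n) takes values in ℤ and is a linear recurrence sequence (in ℤ). If each root α of S(x) has modulus |α| ≤ 1, then each root of S(x) is a root of unity. -/

import Mathlib

open Polynomial

/-! ### Auxiliary lemmas: the forward difference operator on polynomials -/

noncomputable def stmt8.pdiff (r : ℂ[X]) : ℂ[X] := r.comp (X + 1) - r

namespace stmt8

lemma pdiff_natDegree_lt {r : ℂ[X]} (h : r.natDegree ≠ 0) : (pdiff r).natDegree < r.natDegree := by
  have hr0 : r ≠ 0 := fun h0 => h (by simp [h0])
  have hX1 : (X + 1 : ℂ[X]).natDegree = 1 := by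
    simpa using natDegree_X_add_C (1 : ℂ)
  have hnc : (r.comp (X + 1)).natDegree = r.natDegree := by
    rw [natDegree_comp, hX1, mul_one]
  have hlc : (r.comp (X + 1)).leadingCoeff = r.leadingCoeff := by
    rw [leadingCoeff_comp (by rw [hX1]; norm_num)]
    have h1 : (X + 1 : ℂ[X]).leadingCoeff = 1 := by
      simpa using (monic_X_add_C (1 : ℂ)).leadingCoeff
    rw [h1, one_pow, mul_one]
  have hc0 : r.comp (X + 1) ≠ 0 := by
    intro h0
    rw [h0, leadingCoeff_zero, eq_comm, leadingCoeff_eq_zero] at hlc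
    exact hr0 hlc
  have hdeg : (r.comp (X + 1)).degree = r.degree := by
    rw [degree_eq_natDegree hc0, degree_eq_natDegree hr0, hnc]
  have hlt := degree_sub_lt hdeg hc0 hlc
  rw [hdeg] at hlt
  by_cases h0 : pdiff r = 0
  · rw [h0, natDegree_zero]; exact Nat.pos_of_ne_zero h
  · exact natDegree_lt_natDegree h0 hlt

lemma pdiff_iterate_aux : ∀ (d : ℕ) (r : ℂ[X]), r.natDegree ≤ d → pdiff^[d + 1] r = 0 := by
  intro d
  induction d with
  | zero =>
    intro r hr
    have : r = C (r.coeff 0) := eq_C_of_natDegree_le_zero hr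
    rw [Function.iterate_one, pdiff, this]
    simp
  | succ d ih =>
    intro r hr
    rw [Function.iterate_succ_apply]
    by_cases h0 : r.natDegree = 0
    · have h1 : pdiff r = 0 := by
        have : r = C (r.coeff 0) := eq_C_of_natDegree_le_zero h0.le
        rw [pdiff, this]; simp
      rw [h1]
      exact Function.iterate_fixed (by simp [pdiff]) _
    · exact ih _ (by have := pdiff_natDegree_lt h0; omega)

/-! ### The root-killing operator -/

noncomputable def pstep (a : ℂ) (q : ℂ → ℂ[X]) : ℂ → ℂ[X] :=
  fun ρ => C ρ * (q ρ).comp (X + 1) - C a * q ρ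

lemma pstep_eval (a ρ : ℂ) (q : ℂ → ℂ[X]) (x : ℂ) :
    (pstep a q ρ).eval x = ρ * (q ρ).eval (x + 1) - a * (q ρ).eval x := by
  simp [pstep, eval_comp]

lemma pdiff_C_mul (c : ℂ) (r : ℂ[X]) : pdiff (C c * r) = C c * pdiff r := by
  simp [pdiff, mul_sub]

lemma pdiff_iter_C_mul (c : ℂ) (r : ℂ[X]) (m : ℕ) :
    pdiff^[m] (C c * r) = C c * pdiff^[m] r := by
  induction m generalizing r with
  | zero => simp
  | succ m ih => rw [Function.iterate_succ_apply, Function.iterate_succ_apply, pdiff_C_mul, ih]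

lemma pstep_iter_at_self (a : ℂ) (q : ℂ → ℂ[X]) (m : ℕ) :
    (pstep a)^[m] q a = (C a) ^ m * pdiff^[m] (q a) := by
  induction m generalizing q with
  | zero => simp
  | succ m ih =>
    rw [Function.iterate_succ_apply, ih (pstep a q)]
    have h1 : pstep a q a = C a * pdiff (q a) := by simp [pstep, pdiff, mul_sub]
    rw [h1, pdiff_iter_C_mul, Function.iterate_succ_apply, pow_succ]
    ring

lemma pstep_iter_vanish (a : ℂ) (q : ℂ → ℂ[X]) :
    (pstep a)^[(q a).natDegree + 1] q a = 0 := by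
  rw [pstep_iter_at_self, pdiff_iterate_aux _ _ le_rfl, mul_zero]

lemma pstep_ne_zero {a ρ : ℂ} (hρa : ρ ≠ a) (q : ℂ → ℂ[X]) (hq : q ρ ≠ 0) :
    pstep a q ρ ≠ 0 := by
  set r := q ρ with hr
  set d := r.natDegree with hd
  have hcomp_coeff : (r.comp (X + 1)).coeff d = r.leadingCoeff := by
    by_cases h0 : d = 0
    · have : r = C (r.coeff 0) := eq_C_of_natDegree_le_zero (by rw [← hd, h0])
      rw [h0]
      conv_lhs => rw [this]
      simp [leadingCoeff, ← hd, h0]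
    · have hX1 : (X + 1 : ℂ[X]).natDegree = 1 := by simpa using natDegree_X_add_C (1 : ℂ)
      have hnc : (r.comp (X + 1)).natDegree = d := by rw [natDegree_comp, hX1, mul_one]
      have hlc : (r.comp (X + 1)).leadingCoeff = r.leadingCoeff := by
        rw [leadingCoeff_comp (by rw [hX1]; norm_num)]
        have h1 : (X + 1 : ℂ[X]).leadingCoeff = 1 := by simpa using (monic_X_add_C (1 : ℂ)).leadingCoeff
        rw [h1, one_pow, mul_one]
      rw [← hnc, coeff_natDegree, hlc]
  have hcoeffd : (pstep a q ρ).coeff d = (ρ - a) * r.leadingCoeff := by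
    simp only [pstep, coeff_sub, coeff_C_mul, ← hr, hcomp_coeff]
    have : r.coeff d = r.leadingCoeff := coeff_natDegree
    rw [this]; ring
  have hne : (pstep a q ρ).coeff d ≠ 0 := by
    rw [hcoeffd]
    exact mul_ne_zero (sub_ne_zero.mpr hρa) (leadingCoeff_ne_zero.mpr hq)
  intro h0; rw [h0] at hne; simp at hne

lemma pstep_iter_ne_zero {a ρ : ℂ} (hρa : ρ ≠ a) (q : ℂ → ℂ[X]) (hq : q ρ ≠ 0) (m : ℕ) :
    (pstep a)^[m] q ρ ≠ 0 := by
  induction m generalizing q with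
  | zero => simpa
  | succ m ih =>
    rw [Function.iterate_succ_apply]
    exact ih (pstep a q) (pstep_ne_zero hρa q hq)

/-! ### Uniqueness of power sum representations -/

lemma lemA (N : ℕ) : ∀ (s : Finset ℂ), (0:ℂ) ∉ s → ∀ (q : ℂ → ℂ[X]),
    (∀ n : ℕ, N ≤ n → ∑ ρ ∈ s, (q ρ).eval (n:ℂ) * ρ^n = 0) → ∀ ρ ∈ s, q ρ = 0 := by
  intro s
  induction s using Finset.induction_on with
  | empty => intro _ _ _ ρ hρ; exact absurd hρ (Finset.notMem_empty ρ)
  | @insert a t hat ih =>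
    intro h0 q hsum
    have ha0 : a ≠ 0 := fun h => h0 (h ▸ Finset.mem_insert_self a t)
    have h0t : (0:ℂ) ∉ t := fun h => h0 (Finset.mem_insert_of_mem h)
    have key : ∀ (m : ℕ) (n : ℕ), N ≤ n →
        ∑ ρ ∈ insert a t, (((pstep a)^[m] q) ρ).eval (n:ℂ) * ρ^n = 0 := by
      intro m
      induction m with
      | zero => simpa using hsum
      | succ m ihm =>
        intro n hn
        rw [Function.iterate_succ_apply']
        have expand : ∀ ρ ∈ insert a t,
            ((pstep a ((pstep a)^[m] q)) ρ).eval (n:ℂ) * ρ^n =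
            (((pstep a)^[m] q) ρ).eval ((n+1 : ℕ):ℂ) * ρ^(n+1)
              - a * ((((pstep a)^[m] q) ρ).eval (n:ℂ) * ρ^n) := by
          intro ρ _
          rw [pstep_eval]
          push_cast
          ring
        rw [Finset.sum_congr rfl expand, Finset.sum_sub_distrib, ← Finset.mul_sum,
          ihm (n+1) (by omega), ihm n hn]
        ring
    set m := (q a).natDegree + 1 with hm
    have hta : ∀ ρ ∈ t, ((pstep a)^[m] q) ρ = 0 := by
      refine ih h0t ((pstep a)^[m] q) ?_
      intro n hn
      have := key m n hn
      rw [Finset.sum_insert hat, pstep_iter_vanish] at this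
      simpa using this
    have hqt : ∀ ρ ∈ t, q ρ = 0 := by
      intro ρ hρ
      by_contra hne
      have hρa : ρ ≠ a := by rintro rfl; exact hat hρ
      exact pstep_iter_ne_zero hρa q hne m (hta ρ hρ)
    have hqa : q a = 0 := by
      have heval : ∀ n : ℕ, N ≤ n → (q a).eval (n:ℂ) = 0 := by
        intro n hn
        have := hsum n hn
        rw [Finset.sum_insert hat,
          Finset.sum_eq_zero (fun ρ hρ => by rw [hqt ρ hρ]; simp), add_zero] at this
        exact (mul_eq_zero.mp this).resolve_right (pow_ne_zero n ha0)
      refine eq_zero_of_infinite_isRoot _ ?_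
      have hinf : Set.Infinite ((fun n : ℕ => (n:ℂ)) '' {n | N ≤ n}) :=
        Set.Infinite.image (Set.injOn_of_injective Nat.cast_injective)
          (Set.infinite_of_not_bddAbove (by
            intro ⟨b, hb⟩
            exact absurd (hb (Set.mem_setOf.mpr (le_max_left N (b+1)))) (by omega)))
      refine hinf.mono ?_
      rintro x ⟨n, hn, rfl⟩
      exact heval n hn
    intro ρ hρ
    rcases Finset.mem_insert.mp hρ with rfl | hρ
    · exact hqa
    · exact hqt ρ hρ

lemma lemA1 {k : ℕ} (N : ℕ) (β : Fin k → ℂ) (hinj : Function.Injective β)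
    (h0 : ∀ i, β i ≠ 0) (q : Fin k → ℂ[X])
    (hsum : ∀ n : ℕ, N ≤ n → ∑ i, (q i).eval (n:ℂ) * β i ^ n = 0) :
    ∀ i, q i = 0 := by
  classical
  set Q : ℂ → ℂ[X] := fun ρ => if h : ∃ i, β i = ρ then q h.choose else 0 with hQ
  have hQβ : ∀ i, Q (β i) = q i := by
    intro i
    have h : ∃ j, β j = β i := ⟨i, rfl⟩
    simp only [hQ, dif_pos h]
    rw [hinj h.choose_spec]
  have hs0 : (0:ℂ) ∉ Finset.image β Finset.univ := by
    simp only [Finset.mem_image]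
    rintro ⟨i, -, hi⟩
    exact h0 i hi
  have := lemA N (Finset.image β Finset.univ) hs0 Q ?_
  · intro i
    rw [← hQβ i]
    exact this (β i) (Finset.mem_image_of_mem β (Finset.mem_univ i))
  · intro n hn
    rw [Finset.sum_image (fun a _ b _ h => hinj h)]
    rw [Finset.sum_congr rfl (fun i _ => by rw [hQβ i])]
    exact hsum n hn

lemma fiber_sum {m : ℕ} (s : Finset ℂ) (δ : Fin m → ℂ) (hδ : Function.Injective δ)
    (u : Fin m → ℂ[X]) (hsub : Finset.image δ Finset.univ ⊆ s) (x : ℂ) (n : ℕ) :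
    ∑ ρ ∈ s, (∑ i ∈ Finset.univ.filter (fun i => δ i = ρ), u i).eval x * ρ ^ n
      = ∑ i, (u i).eval x * δ i ^ n := by
  classical
  rw [← Finset.sum_subset hsub]
  · rw [Finset.sum_image (fun a _ b _ h => hδ h)]
    refine Finset.sum_congr rfl (fun i _ => ?_)
    have : Finset.univ.filter (fun j => δ j = δ i) = {i} := by
      ext j
      simp only [Finset.mem_filter, Finset.mem_univ, true_and, Finset.mem_singleton]
      exact ⟨fun h => hδ h, fun h => by rw [h]⟩
    rw [this, Finset.sum_singleton]
  · intro ρ _ hρ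
    have : Finset.univ.filter (fun i => δ i = ρ) = ∅ := by
      rw [Finset.filter_eq_empty_iff]
      intro i _ hi
      exact hρ (by rw [← hi]; exact Finset.mem_image_of_mem δ (Finset.mem_univ i))
    rw [this, Finset.sum_empty, eval_zero, zero_mul]

lemma lemC {k1 k2 : ℕ} (N : ℕ) (β : Fin k1 → ℂ) (γ : Fin k2 → ℂ)
    (hβinj : Function.Injective β) (hγinj : Function.Injective γ)
    (hβ0 : ∀ i, β i ≠ 0) (hγ0 : ∀ i, γ i ≠ 0)
    (q : Fin k1 → ℂ[X]) (r : Fin k2 → ℂ[X]) (hr0 : ∀ i, r i ≠ 0)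
    (hsum : ∀ n : ℕ, N ≤ n →
      ∑ i, (q i).eval (n:ℂ) * β i ^ n = ∑ i, (r i).eval (n:ℂ) * γ i ^ n) :
    ∀ j, γ j ∈ Set.range β := by
  classical
  set s : Finset ℂ := Finset.image β Finset.univ ∪ Finset.image γ Finset.univ with hs
  set Q : ℂ → ℂ[X] :=
    fun ρ => (∑ i ∈ Finset.univ.filter (fun i => β i = ρ), q i)
      - (∑ i ∈ Finset.univ.filter (fun i => γ i = ρ), r i) with hQ
  have h0s : (0:ℂ) ∉ s := by
    simp only [hs, Finset.mem_union, Finset.mem_image]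
    rintro (⟨i, -, hi⟩ | ⟨i, -, hi⟩)
    · exact hβ0 i hi
    · exact hγ0 i hi
  have hQ0 := lemA N s h0s Q ?_
  swap
  · intro n hn
    have : ∀ ρ ∈ s, (Q ρ).eval (n:ℂ) * ρ^n =
        (∑ i ∈ Finset.univ.filter (fun i => β i = ρ), q i).eval (n:ℂ) * ρ^n
        - (∑ i ∈ Finset.univ.filter (fun i => γ i = ρ), r i).eval (n:ℂ) * ρ^n := by
      intro ρ _
      simp only [hQ, eval_sub]
      ring
    rw [Finset.sum_congr rfl this, Finset.sum_sub_distrib,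
      fiber_sum s β hβinj q Finset.subset_union_left (n:ℂ) n,
      fiber_sum s γ hγinj r Finset.subset_union_right (n:ℂ) n,
      hsum n hn, sub_self]
  intro j
  by_contra hnr
  have hγs : γ j ∈ s := Finset.mem_union_right _ (Finset.mem_image_of_mem γ (Finset.mem_univ j))
  have := hQ0 (γ j) hγs
  have hβempty : Finset.univ.filter (fun i => β i = γ j) = ∅ := by
    rw [Finset.filter_eq_empty_iff]
    intro i _ hi
    exact hnr ⟨i, hi⟩
  have hγsingle : Finset.univ.filter (fun i => γ i = γ j) = {j} := by
    ext i
    simp only [Finset.mem_filter, Finset.mem_univ, true_and, Finset.mem_singleton]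
    exact ⟨fun h => hγinj h, fun h => by rw [h]⟩
  simp only [hQ, hβempty, hγsingle] at this
  simp only [Finset.sum_empty, Finset.sum_singleton, zero_sub, neg_eq_zero] at this
  exact hr0 j this

/-! ### coefficient of a shifted polynomial -/

lemma comp_linear_coeff (p : ℂ[X]) (t : ℂ) :
    (p.comp (X + C t)).coeff p.natDegree = p.leadingCoeff := by
  by_cases h0 : p.natDegree = 0
  · have : p = C (p.coeff 0) := eq_C_of_natDegree_le_zero h0.le
    rw [h0]
    conv_lhs => rw [this]
    simp [leadingCoeff, h0]
  · have hX1 : (X + C t : ℂ[X]).natDegree = 1 := natDegree_X_add_C t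
    have hnc : (p.comp (X + C t)).natDegree = p.natDegree := by
      rw [natDegree_comp, hX1, mul_one]
    have hlc : (p.comp (X + C t)).leadingCoeff = p.leadingCoeff := by
      rw [leadingCoeff_comp (by rw [hX1]; norm_num)]
      rw [(monic_X_add_C t).leadingCoeff, one_pow, mul_one]
    rw [← hnc, coeff_natDegree, hlc]

/-! ### Kronecker via the norm -/

lemma norm_trick (K : Type*) [Field K] [NumberField K] (x : K) (hx : x ≠ 0)
    (hxi : IsIntegral ℤ x) (hle : ∀ φ : K →+* ℂ, ‖φ x‖ ≤ 1) :
    ∃ m : ℕ, 0 < m ∧ x ^ m = 1 := by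
  classical
  have hprod : (algebraMap ℚ ℂ) (Algebra.norm ℚ x) = ∏ σ : K →ₐ[ℚ] ℂ, σ x :=
    Algebra.norm_eq_prod_embeddings ℚ ℂ x
  have hNint : IsIntegral ℤ (Algebra.norm ℚ x) := Algebra.isIntegral_norm ℚ hxi
  obtain ⟨z, hz⟩ := IsIntegrallyClosed.isIntegral_iff.mp hNint
  have hN0 : Algebra.norm ℚ x ≠ 0 := by
    rw [Algebra.norm_ne_zero_iff]
    exact hx
  have hz0 : z ≠ 0 := by rintro rfl; rw [map_zero] at hz; exact hN0 hz.symm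
  have habs : ‖(algebraMap ℚ ℂ) (Algebra.norm ℚ x)‖ = ∏ σ : K →ₐ[ℚ] ℂ,
      ‖σ x‖ := by rw [hprod, norm_prod]
  have hge1 : (1:ℝ) ≤ ∏ σ : K →ₐ[ℚ] ℂ, ‖σ x‖ := by
    rw [← habs, ← hz]
    have h1 : (algebraMap ℚ ℂ) ((algebraMap ℤ ℚ) z) = (z : ℂ) := by
      rw [eq_intCast, eq_ratCast]; push_cast; rfl
    rw [h1, Complex.norm_intCast]
    exact_mod_cast Int.one_le_abs hz0
  have hle' : ∀ σ : K →ₐ[ℚ] ℂ, ‖σ x‖ ≤ 1 := fun σ => hle σ.toRingHom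
  have heq1 : ∀ σ : K →ₐ[ℚ] ℂ, ‖σ x‖ = 1 := by
    intro σ0
    refine le_antisymm (hle' σ0) ?_
    have hsplit : ∏ σ : K →ₐ[ℚ] ℂ, ‖σ x‖
        = ‖σ0 x‖ * ∏ σ ∈ Finset.univ.erase σ0, ‖σ x‖ :=
      (Finset.mul_prod_erase Finset.univ _ (Finset.mem_univ σ0)).symm
    have hrest : ∏ σ ∈ Finset.univ.erase σ0, ‖σ x‖ ≤ 1 :=
      Finset.prod_le_one (fun σ _ => norm_nonneg _) (fun σ _ => hle' σ)
    calc (1:ℝ) ≤ ∏ σ : K →ₐ[ℚ] ℂ, ‖σ x‖ := hge1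
      _ ≤ ‖σ0 x‖ * 1 := by
          rw [hsplit]
          exact mul_le_mul_of_nonneg_left hrest (norm_nonneg _)
      _ = ‖σ0 x‖ := mul_one _
  have hnorm1 : ∀ φ : K →+* ℂ, ‖φ x‖ = 1 := by
    intro φ
    have := heq1 (RingHom.equivRatAlgHom K ℂ φ)
    rwa [RingHom.equivRatAlgHom_apply] at this
  obtain ⟨n, hn, hxn⟩ := NumberField.Embeddings.pow_eq_one_of_norm_eq_one K ℂ hxi hnorm1
  exact ⟨n, hn, hxn⟩

end stmt8

/-- Let `S(x) = ∑_{i=1}^k p_i(x) α_i^x` be a power sum such that `n ↦ S(n)`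
takes integer values (given by `g : ℕ → ℤ`) and is a linear recurrence sequence in ℤ.
If each root `α_i` has modulus `|α_i| ≤ 1`, then each root of `S(x)` is a root of unity. -/
theorem stmt8 (k : ℕ) (p : Fin k → Polynomial ℂ) (α : Fin k → ℂ)
    (hp0 : ∀ i, p i ≠ 0) (hpalg : ∀ i n, IsAlgebraic ℚ ((p i).coeff n))
    (hα0 : ∀ i, α i ≠ 0) (hαalg : ∀ i, IsAlgebraic ℚ (α i))
    (hαinj : Function.Injective α)
    (g : ℕ → ℤ)
    (hg : ∀ n ≥ 1, (g n : ℂ) = ∑ i, (p i).eval (n : ℂ) * α i ^ n)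
    (hlin : ∃ (l : ℕ) (b : ℕ → ℤ), (l = 0 ∨ b 0 ≠ 0) ∧
      ∀ n ≥ 1, g (n + l) = ∑ i ∈ Finset.range l, b i * g (n + i))
    (hmod : ∀ i, ‖α i‖ ≤ 1) :
    ∀ i, ∃ m : ℕ, 0 < m ∧ α i ^ m = 1 := by
  classical
  obtain ⟨l, b, -, hrec⟩ := hlin
  -- Case l = 0 : g vanishes, so k = 0 (vacuous conclusion)
  rcases Nat.eq_zero_or_pos l with rfl | hl
  · have hzero : ∀ n : ℕ, 1 ≤ n → ∑ i, (p i).eval (n:ℂ) * α i ^ n = 0 := by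
      intro n hn
      rw [← hg n hn]
      have := hrec n hn
      simp only [Finset.range_zero, Finset.sum_empty, add_zero] at this
      rw [this]; simp
    intro i
    exact absurd (stmt8.lemA1 1 α hαinj hα0 p hzero i) (hp0 i)
  -- Main case : l ≥ 1
  -- Step 1 : each α i satisfies the integer characteristic polynomial
  have hchar : ∀ i, α i ^ l = ∑ j ∈ Finset.range l, (b j : ℂ) * α i ^ j := by
    set q : Fin k → ℂ[X] := fun i =>
      C (α i ^ l) * (p i).comp (X + C (l:ℂ)) -
        ∑ j ∈ Finset.range l, C ((b j : ℂ) * α i ^ j) * (p i).comp (X + C (j:ℂ)) with hq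
    have hqeval : ∀ i (n : ℕ), (q i).eval (n:ℂ) * α i ^ n =
        (p i).eval (((n + l : ℕ)):ℂ) * α i ^ (n + l)
          - ∑ j ∈ Finset.range l, (b j : ℂ) * ((p i).eval (((n + j : ℕ)):ℂ) * α i ^ (n + j)) := by
      intro i n
      simp only [hq, eval_sub, eval_mul, eval_C, eval_finset_sum, eval_comp, eval_add, eval_X]
      push_cast
      rw [sub_mul, Finset.sum_mul]
      congr 1
      · rw [pow_add]; ring
      · exact Finset.sum_congr rfl fun j _ => by rw [pow_add]; ring
    have hsum : ∀ n : ℕ, 1 ≤ n → ∑ i, (q i).eval (n:ℂ) * α i ^ n = 0 := by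
      intro n hn
      rw [Finset.sum_congr rfl (fun i _ => hqeval i n), Finset.sum_sub_distrib]
      rw [← hg (n + l) (by omega)]
      rw [Finset.sum_comm]
      have : ∀ j ∈ Finset.range l, ∑ i, (b j : ℂ) * ((p i).eval (((n + j : ℕ)):ℂ) * α i ^ (n + j))
          = (b j : ℂ) * (g (n + j) : ℂ) := by
        intro j _
        rw [← Finset.mul_sum, ← hg (n + j) (by omega)]
      rw [Finset.sum_congr rfl this]
      rw [sub_eq_zero]
      exact_mod_cast hrec n hn
    have hq0 := stmt8.lemA1 1 α hαinj hα0 q hsum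
    intro i
    have hd := congrArg (fun r => r.coeff (p i).natDegree) (hq0 i)
    simp only [hq, coeff_sub, coeff_zero, finset_sum_coeff, coeff_C_mul,
      stmt8.comp_linear_coeff] at hd
    have hlead : (p i).leadingCoeff ≠ 0 := leadingCoeff_ne_zero.mpr (hp0 i)
    have h2 : (α i ^ l - ∑ j ∈ Finset.range l, (b j:ℂ) * α i ^ j) * (p i).leadingCoeff = 0 := by
      rw [sub_mul, Finset.sum_mul]
      exact hd
    exact sub_eq_zero.mp ((mul_eq_zero.mp h2).resolve_right hlead)
  -- Step 2 : each α i is an algebraic integer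
  have hint : ∀ i, IsIntegral ℤ (α i) := by
    intro i
    refine ⟨X ^ l - ∑ j ∈ Finset.range l, C (b j) * X ^ j, ?_, ?_⟩
    · refine Polynomial.monic_X_pow_sub ?_
      refine lt_of_le_of_lt (Polynomial.degree_sum_le _ _) ?_
      rw [Finset.sup_lt_iff (by exact_mod_cast WithBot.bot_lt_coe l)]
      intro j hj
      refine lt_of_le_of_lt (degree_C_mul_X_pow_le _ _) ?_
      exact_mod_cast Finset.mem_range.mp hj
    · have : Polynomial.eval₂ (algebraMap ℤ ℂ) (α i)
          (X ^ l - ∑ j ∈ Finset.range l, C (b j) * X ^ j)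
          = α i ^ l - ∑ j ∈ Finset.range l, (b j : ℂ) * α i ^ j := by
        simp only [Polynomial.eval₂_sub, Polynomial.eval₂_finset_sum, Polynomial.eval₂_mul,
          Polynomial.eval₂_C, Polynomial.eval₂_X_pow, Polynomial.eval₂_pow, Polynomial.eval₂_X,
          eq_intCast]
        congr 1
        refine Finset.sum_congr rfl fun j _ => ?_
        rw [show ((b j : ℤ[X])) = C (b j) from (Polynomial.C_eq_intCast _).symm,
          Polynomial.eval₂_C, eq_intCast]
      rw [this, hchar i, sub_self]
  -- Step 3 : build the number field K
  set S : Set ℂ := Set.range α ∪ ⋃ i, ((p i).coeffs : Set ℂ) with hS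
  have hSfin : S.Finite := by
    apply Set.Finite.union (Set.finite_range α)
    exact Set.finite_iUnion (fun i => ((p i).coeffs : Set ℂ).toFinite)
  have hSalg : ∀ x ∈ S, IsIntegral ℚ x := by
    rintro x (⟨i, rfl⟩ | hx)
    · exact (hαalg i).isIntegral
    · simp only [Set.mem_iUnion, Finset.mem_coe] at hx
      obtain ⟨i, hx⟩ := hx
      obtain ⟨n, -, rfl⟩ := Polynomial.mem_coeffs_iff.mp hx
      exact (hpalg i n).isIntegral
  set K : IntermediateField ℚ ℂ := IntermediateField.adjoin ℚ S with hK
  haveI : Finite S := hSfin.to_subtype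
  haveI hFD : FiniteDimensional ℚ K := IntermediateField.finiteDimensional_adjoin hSalg
  haveI : NumberField K := ⟨⟩
  have hαK : ∀ i, α i ∈ K := fun i =>
    IntermediateField.subset_adjoin ℚ S (Or.inl ⟨i, rfl⟩)
  have hcoefK : ∀ i n, (p i).coeff n ∈ K := by
    intro i n
    by_cases h : (p i).coeff n = 0
    · rw [h]; exact zero_mem K
    · refine IntermediateField.subset_adjoin ℚ S (Or.inr ?_)
      exact Set.mem_iUnion.mpr ⟨i, Polynomial.coeff_mem_coeffs h⟩
  -- lift the data to K
  set αK : Fin k → K := fun i => ⟨α i, hαK i⟩ with hαKdef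
  set pK : Fin k → Polynomial K := fun i =>
    ∑ j ∈ (p i).support, C (⟨(p i).coeff j, hcoefK i j⟩ : K) * X ^ j with hpKdef
  set ι : K →+* ℂ := algebraMap K ℂ with hι
  have hιmap : ∀ i, (pK i).map ι = p i := by
    intro i
    rw [hpKdef]
    rw [Polynomial.map_sum]
    conv_rhs => rw [Polynomial.as_sum_support (p i)]
    refine Finset.sum_congr rfl fun j _ => ?_
    rw [Polynomial.map_mul, Polynomial.map_C, Polynomial.map_pow, Polynomial.map_X,
      C_mul_X_pow_eq_monomial]
    rfl
  have hpK0 : ∀ i, pK i ≠ 0 := by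
    intro i h
    apply hp0 i
    rw [← hιmap i, h, Polynomial.map_zero]
  have hαK0 : ∀ i, αK i ≠ 0 := by
    intro i h
    apply hα0 i
    have := congrArg (fun x : K => (x : ℂ)) h
    simpa [hαKdef] using this
  have hαKinj : Function.Injective αK := by
    intro i j h
    apply hαinj
    have := congrArg (fun x : K => (x : ℂ)) h
    simpa [hαKdef] using this
  -- the identity over K
  have hgK : ∀ n : ℕ, 1 ≤ n → ((g n : ℤ) : K) = ∑ i, (pK i).eval (n : K) * αK i ^ n := by
    intro n hn
    apply (algebraMap K ℂ).injective
    rw [map_intCast, map_sum]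
    rw [hg n hn]
    refine Finset.sum_congr rfl fun i _ => ?_
    rw [map_mul, map_pow, ← Polynomial.eval₂_at_apply, Polynomial.eval₂_eq_eval_map, hιmap i]
    norm_num [hαKdef]
  -- for every embedding φ : K →+* ℂ, |φ (αK i)| ≤ 1
  have hembed : ∀ (φ : K →+* ℂ) (i : Fin k), ‖φ (αK i)‖ ≤ 1 := by
    intro φ i
    have hrep : ∀ n : ℕ, 1 ≤ n →
        ∑ j, (p j).eval (n:ℂ) * α j ^ n
          = ∑ j, ((pK j).map φ).eval (n:ℂ) * (φ (αK j)) ^ n := by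
      intro n hn
      rw [← hg n hn]
      have := congrArg φ (hgK n hn)
      rw [map_intCast, map_sum] at this
      rw [this]
      refine Finset.sum_congr rfl fun j _ => ?_
      rw [map_mul, map_pow, ← Polynomial.eval₂_at_apply, Polynomial.eval₂_eq_eval_map]
      norm_num
    have hφinj : Function.Injective φ := φ.injective
    have hmem := stmt8.lemC 1 α (fun j => φ (αK j)) hαinj
      (fun i j h => hαKinj (hφinj h))
      hα0
      (fun j h => hαK0 j (hφinj (by simpa using h)))
      p (fun j => (pK j).map φ)
      (fun j h => hpK0 j ((Polynomial.map_injective φ hφinj) (by simpa using h)))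
      hrep i
    obtain ⟨j, hj⟩ := hmem
    have hj' : α j = φ (αK i) := hj
    rw [← hj']
    exact hmod j
  -- conclude with the norm trick
  intro i
  have hxi : IsIntegral ℤ (αK i) := by
    rw [← isIntegral_algebraMap_iff (algebraMap K ℂ).injective]
    exact hint i
  obtain ⟨m, hm, hxm⟩ := stmt8.norm_trick K (αK i) (hαK0 i) hxi (fun φ => hembed φ i)
  refine ⟨m, hm, ?_⟩
  have := congrArg (fun x : K => (x : ℂ)) hxm
  simpa [hαKdef] using this
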